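/- Let U → V → W be an exact sequence of moderate persistence modules (exact at V), where moderate means b_ε is finite for all ε > 0. Then for every ε > 0, b_{2ε}(V) ≤ b_ε(U) + b_ε(W), where b_δ denotes the number of bars of length ≥ δ in the barcode. -/

import Mathlib

open scoped Classical

/-- A persistence module over a field `F`: a family of `F`-vector spaces indexed by `ℝ`
with functorial structure ("inclusion") maps. -/
structure PersMod (F : Type) [Field F] where
  V : ℝ → Type
  [acg : ∀ t, AddCommGroup (V t)]
  [mod : ∀ t, Module F (V t)]
  map : ∀ s t : ℝ, s ≤ t → (V s →ₗ[F] V t)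
  map_id : ∀ t (x : V t), map t t le_rfl x = x
  map_comp : ∀ s t u (hst : s ≤ t) (htu : t ≤ u) (x : V s),
    map t u htu (map s t hst x) = map s u (hst.trans htu) x

attribute [instance] PersMod.acg PersMod.mod

namespace PersMod

variable (F : Type) [Field F]

/-- A bar `(a, b)` (the interval `[a, b)`) is alive at time `t` iff `a ≤ t < b`. -/
def alive (p : ℝ × EReal) (t : ℝ) : Prop := p.1 ≤ t ∧ (t : EReal) < p.2

/-- The interval persistence module `⊕_{i} F[aᵢ, bᵢ)` associated to a family of bars. -/
noncomputable def intervalSum {ι : Type} (bars : ι → ℝ × EReal) : PersMod F where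
  V t := (Finsupp.supported F F {i | alive (bars i) t} : Submodule F (ι →₀ F))
  map s t _ :=
    (Finsupp.restrictDom F F {i | alive (bars i) t}).comp
      (Submodule.subtype (Finsupp.supported F F {i | alive (bars i) s}))
  map_id t x := by
    apply Subtype.ext
    ext a
    simp only [LinearMap.comp_apply, Submodule.subtype_apply, Finsupp.restrictDom_apply,
      Finsupp.filter_apply]
    split_ifs with hmem
    · rfl
    · by_contra hne
      exact hmem ((Finsupp.mem_supported F _).mp x.2
        (Finsupp.mem_support_iff.mpr fun hz => hne hz.symm))
  map_comp s t u hst htu x := by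
    apply Subtype.ext
    ext a
    simp only [LinearMap.comp_apply, Submodule.subtype_apply, Finsupp.restrictDom_apply,
      Finsupp.filter_apply]
    by_cases hu : a ∈ {i | alive (bars i) u}
    · rw [if_pos hu, if_pos hu]
      by_cases hs : (x : ι →₀ F) a = 0
      · simp [hs]
      · have has : alive (bars a) s :=
          (Finsupp.mem_supported F _).mp x.2 (Finsupp.mem_support_iff.mpr hs)
        have hu' : alive (bars a) u := hu
        have hat : alive (bars a) t :=
          ⟨has.1.trans hst, lt_of_le_of_lt (EReal.coe_le_coe_iff.mpr htu) hu'.2⟩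
        rw [if_pos (show a ∈ {i | alive (bars i) t} from hat)]
    · rw [if_neg hu, if_neg hu]
  
/-- `M` has barcode `bars` iff `M` is isomorphic, as a persistence module, to the direct
sum of the interval modules `F[aᵢ, bᵢ)`. -/
noncomputable def HasBarcode (M : PersMod F) {ι : Type} (bars : ι → ℝ × EReal) : Prop :=
  ∃ e : ∀ t, M.V t ≃ₗ[F] (intervalSum F bars).V t,
    ∀ s t (h : s ≤ t) (x : M.V s),
      e t (M.map s t h x) = (intervalSum F bars).map s t h (e s x)

/-- Length of a bar. -/
noncomputable def barLength (p : ℝ × EReal) : EReal := p.2 - (p.1 : EReal)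

/-- The number of bars of length at least `ε`. -/
noncomputable def bCount {ι : Type} (bars : ι → ℝ × EReal) (ε : ℝ) : ℕ :=
  Nat.card {i : ι // (ε : EReal) ≤ barLength (bars i)}

end PersMod

open PersMod

namespace Stmt7

variable {F : Type} [Field F]

section Basics

variable {ι : Type} {bars : ι → ℝ × EReal}

theorem coord_map {s t : ℝ} (h : s ≤ t) (z : (intervalSum F bars).V s) (k : ι) :
    ((intervalSum F bars).map s t h z).1 k
      = if alive (bars k) t then z.1 k else 0 := by
  show ((Finsupp.restrictDom F F {i | alive (bars i) t}).comp
      (Submodule.subtype (Finsupp.supported F F {i | alive (bars i) s})) z).1 k = _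
  show (Finsupp.filter (fun i => i ∈ {i | alive (bars i) t}) z.1) k = _
  rw [Finsupp.filter_apply]
  congr 1

theorem alive_of_coord {t : ℝ} (z : (intervalSum F bars).V t) {k : ι}
    (h : z.1 k ≠ 0) : alive (bars k) t :=
  (Finsupp.mem_supported F z.1).mp z.2 (Finsupp.mem_support_iff.mpr h)

theorem map_eq_zero {s t : ℝ} (h : s ≤ t) (z : (intervalSum F bars).V s)
    (hz : ∀ k, z.1 k ≠ 0 → ¬ alive (bars k) t) :
    (intervalSum F bars).map s t h z = 0 := by
  apply Subtype.ext
  ext k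
  rw [coord_map h z k]
  by_cases ha : alive (bars k) t
  · rw [if_pos ha]
    by_contra hne
    exact hz k hne ha
  · rw [if_neg ha]; rfl

end Basics

section Elim

variable {N : Type} [AddCommGroup N] [Module F N]

theorem elim {κ : Type} [LinearOrder κ] (J : Finset κ) (y : κ → N) (φ : κ → N →ₗ[F] F)
    (h1 : ∀ j ∈ J, ∀ j' ∈ J, j' < j → φ j' (y j) = 0)
    (h2 : ∀ j ∈ J, φ j (y j) ≠ 0 ∨ ∀ z : N, φ j z = 0) :
    ∀ z : N, ∃ c : κ → F, ∀ j ∈ J, φ j (z - ∑ j' ∈ J, c j' • y j') = 0 := by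
  induction J using Finset.induction_on_max with
  | empty => intro z; exact ⟨0, fun j hj => absurd hj (Finset.notMem_empty j)⟩
  | insert a s ha IH =>
    intro z
    have hans : a ∉ s := fun h => lt_irrefl a (ha a h)
    obtain ⟨c', hc'⟩ := IH
      (fun j hj j' hj' h => h1 j (Finset.mem_insert_of_mem hj) j' (Finset.mem_insert_of_mem hj') h)
      (fun j hj => h2 j (Finset.mem_insert_of_mem hj)) z
    set z' := z - ∑ j' ∈ s, c' j' • y j' with hz'
    set ca : F := if hφ : φ a (y a) = 0 then 0 else φ a z' / φ a (y a) with hca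
    refine ⟨Function.update c' a ca, fun j hj => ?_⟩
    have hsum : ∑ j' ∈ insert a s, Function.update c' a ca j' • y j'
        = ca • y a + ∑ j' ∈ s, c' j' • y j' := by
      rw [Finset.sum_insert hans, Function.update_self]
      congr 1
      exact Finset.sum_congr rfl fun j' hj' =>
        by rw [Function.update_of_ne (fun h : j' = a => hans (h ▸ hj'))]
    have key : z - ∑ j' ∈ insert a s, Function.update c' a ca j' • y j' = z' - ca • y a := by
      rw [hsum, hz']; abel
    rw [key]
    rcases Finset.mem_insert.mp hj with rfl | hjs
    · by_cases hφ : φ j (y j) = 0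
      · rcases h2 j (Finset.mem_insert_self j s) with h | h
        · exact absurd hφ h
        · exact h _
      · rw [map_sub, map_smul, hca, dif_neg hφ]
        rw [smul_eq_mul, div_mul_cancel₀ _ hφ, sub_self]
    · have h0 : φ j z' = 0 := hc' j hjs
      have h1' : φ j (y a) = 0 :=
        h1 a (Finset.mem_insert_self a s) j (Finset.mem_insert_of_mem hjs) (ha j hjs)
      rw [map_sub, map_smul, h0, h1', smul_eq_mul, mul_zero, sub_zero]

end Elim

section ERealHelpers

theorem length_gt {p : ℝ × EReal} {s δ : ℝ} (h1 : p.1 ≤ s) (h2 : (↑(s + δ) : EReal) < p.2) :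
    (δ : EReal) < barLength p := by
  have key : (↑(s + δ) : EReal) - (↑s : EReal) < p.2 - (↑p.1 : EReal) :=
    EReal.sub_lt_sub_of_lt_of_le h2 (EReal.coe_le_coe_iff.mpr h1)
      (EReal.coe_ne_bot _) (EReal.coe_ne_top _)
  have : (↑(s + δ) : EReal) - (↑s : EReal) = (δ : EReal) := by
    rw [← EReal.coe_sub]; norm_num
  rwa [this] at key

theorem exists_push {ι : Type} (supp : Finset ι) (β : ι → EReal) (B : EReal) (m : ℝ)
    (hm : (m : EReal) < B) (h : ∀ k ∈ supp, β k < B) :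
    ∃ t : ℝ, m ≤ t ∧ (t : EReal) < B ∧ ∀ k ∈ supp, β k ≤ (t : EReal) := by
  set E : Finset EReal := insert (↑m) (supp.image β) with hE
  have hne : E.Nonempty := Finset.insert_nonempty _ _
  have hmax : E.max' hne < B := by
    rw [Finset.max'_lt_iff]
    intro y hy
    rcases Finset.mem_insert.mp hy with rfl | hy'
    · exact hm
    · obtain ⟨k, hk, rfl⟩ := Finset.mem_image.mp hy'
      exact h k hk
  obtain ⟨t, ht1, ht2⟩ := EReal.exists_between_coe_real hmax
  refine ⟨t, ?_, ht2, fun k hk => ?_⟩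
  · have : (↑m : EReal) ≤ E.max' hne := Finset.le_max' _ _ (Finset.mem_insert_self _ _)
    exact_mod_cast this.trans ht1.le
  · exact (Finset.le_max' _ _ (Finset.mem_insert_of_mem (Finset.mem_image_of_mem β hk))).trans ht1.le

end ERealHelpers

section Engine

variable {ιU ιV ιW : Type} (bU : ιU → ℝ × EReal) (bV : ιV → ℝ × EReal)
  (bW : ιW → ℝ × EReal) {δ : ℝ} (hδ : 0 < δ)
  (f : ∀ t, (intervalSum F bU).V t →ₗ[F] (intervalSum F bV).V t)
  (g : ∀ t, (intervalSum F bV).V t →ₗ[F] (intervalSum F bW).V t)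
  {n : ℕ} (v : Fin n → ιV)

/-- The coordinate functional. -/
noncomputable def coordFn {ι : Type} (bars : ι → ℝ × EReal) (t : ℝ) (k : ι) :
    (intervalSum F bars).V t →ₗ[F] F :=
  (Finsupp.lapply k).comp (Submodule.subtype (Finsupp.supported F F {i | alive (bars i) t}))

@[simp] theorem coordFn_apply {ι : Type} (bars : ι → ℝ × EReal) (t : ℝ) (k : ι)
    (z : (intervalSum F bars).V t) : coordFn bars t k z = z.1 k := rfl

/-- `g` followed by pushing forward `δ`. -/
noncomputable def ww (j : Fin n) :
    (intervalSum F bV).V ((bV (v j)).1) →ₗ[F] (intervalSum F bW).V ((bV (v j)).1 + δ) :=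
  ((intervalSum F bW).map _ _ (le_add_of_nonneg_right hδ.le)).comp (g ((bV (v j)).1))

theorem ww_apply (j : Fin n) (x : (intervalSum F bV).V ((bV (v j)).1)) :
    ww bV bW hδ g v j x = (intervalSum F bW).map _ _ (le_add_of_nonneg_right hδ.le)
      (g ((bV (v j)).1) x) := rfl

/-- The stage data for the inductive construction. -/
structure Stage (m : ℕ) where
  x : ∀ j : Fin n, (intervalSum F bV).V ((bV (v j)).1)
  u : ∀ j : Fin n, (intervalSum F bU).V ((bV (v j)).1 + δ)
  piv : Fin n → Option (ιU ⊕ ιW)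
  hsome : ∀ j : Fin n, (j : ℕ) < m → ∃ p, piv j = some p
  hx1 : ∀ j : Fin n, (j : ℕ) < m → (x j).1 (v j) = 1
  hxsupp : ∀ j : Fin n, (j : ℕ) < m → ∀ k, (x j).1 k ≠ 0 → ∃ j' : Fin n, j' ≤ j ∧ k = v j'
  hw0 : ∀ j : Fin n, (j : ℕ) < m → ∀ j' : Fin n, j' < j → ∀ k',
    piv j' = some (Sum.inr k') → (ww bV bW hδ g v j (x j)).1 k' = 0
  hinr : ∀ j : Fin n, (j : ℕ) < m → ∀ k, piv j = some (Sum.inr k) →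
    (ww bV bW hδ g v j (x j)).1 k ≠ 0 ∧ (δ : EReal) < barLength (bW k) ∧ u j = 0
  hinl : ∀ j : Fin n, (j : ℕ) < m → ∀ k, piv j = some (Sum.inl k) →
    ww bV bW hδ g v j (x j) = 0 ∧
    f ((bV (v j)).1 + δ) (u j)
      = (intervalSum F bV).map _ _ (le_add_of_nonneg_right hδ.le) (x j) ∧
    (u j).1 k ≠ 0 ∧ (δ : EReal) < barLength (bU k)
  hu0 : ∀ j : Fin n, (j : ℕ) < m → ∀ j' : Fin n, j' < j → ∀ k',
    piv j' = some (Sum.inl k') → (u j).1 k' = 0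

theorem stage_zero : Nonempty (Stage bU bV bW hδ f g v 0) :=
  ⟨{ x := fun _ => 0
     u := fun _ => 0
     piv := fun _ => none
     hsome := fun j hj => absurd hj (Nat.not_lt_zero _)
     hx1 := fun j hj => absurd hj (Nat.not_lt_zero _)
     hxsupp := fun j hj => absurd hj (Nat.not_lt_zero _)
     hw0 := fun j hj => absurd hj (Nat.not_lt_zero _)
     hinr := fun j hj => absurd hj (Nat.not_lt_zero _)
     hinl := fun j hj => absurd hj (Nat.not_lt_zero _)
     hu0 := fun j hj => absurd hj (Nat.not_lt_zero _) }⟩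

theorem pushW_eq
    (hg : ∀ s t (h : s ≤ t) (z : (intervalSum F bV).V s),
      g t ((intervalSum F bV).map s t h z) = (intervalSum F bW).map s t h (g s z))
    (j j' : Fin n) (h : (bV (v j)).1 ≤ (bV (v j')).1)
    (x : (intervalSum F bV).V ((bV (v j)).1)) :
    (intervalSum F bW).map _ _ (add_le_add_left h δ) (ww bV bW hδ g v j x)
      = ww bV bW hδ g v j' ((intervalSum F bV).map _ _ h x) := by
  rw [ww_apply, ww_apply, PersMod.map_comp, hg, PersMod.map_comp]

set_option maxHeartbeats 1000000 in
theorem stage_step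
    (hf : ∀ s t (h : s ≤ t) (z : (intervalSum F bU).V s),
      f t ((intervalSum F bU).map s t h z) = (intervalSum F bV).map s t h (f s z))
    (hg : ∀ s t (h : s ≤ t) (z : (intervalSum F bV).V s),
      g t ((intervalSum F bV).map s t h z) = (intervalSum F bW).map s t h (g s z))
    (hexact : ∀ t, LinearMap.range (f t) = LinearMap.ker (g t))
    (hmono : Monotone fun j : Fin n => (bV (v j)).1)
    (hvinj : Function.Injective v)
    (hSV : ∀ j : Fin n, ((2 * δ : ℝ) : EReal) < barLength (bV (v j)))
    (m : ℕ) (hm : m < n) (S : Stage bU bV bW hδ f g v m) :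
    Nonempty (Stage bU bV bW hδ f g v (m + 1)) := by
  classical
  obtain ⟨x, u, piv, hsome, hx1, hxsupp, hw0, hinr, hinl, hu0⟩ := S
  set j₀ : Fin n := ⟨m, hm⟩ with hj₀def
  have hj₀m : (j₀ : ℕ) = m := rfl
  -- basic facts about endpoints
  have hA2B : ∀ j : Fin n, (((bV (v j)).1 + 2 * δ : ℝ) : EReal) < (bV (v j)).2 := by
    intro j
    have h1 := hSV j
    rw [barLength] at h1
    have h2 := (EReal.lt_sub_iff_add_lt (Or.inl (EReal.coe_ne_bot _))
      (Or.inr (EReal.coe_ne_bot _))).mp h1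
    rw [← EReal.coe_add, add_comm] at h2
    exact h2
  have haliveA : ∀ j : Fin n, alive (bV (v j)) ((bV (v j)).1) := by
    intro j
    refine ⟨le_refl _, lt_trans ?_ (hA2B j)⟩
    exact_mod_cast (by linarith : (bV (v j)).1 < (bV (v j)).1 + 2 * δ)
  have hAle : ∀ j : Fin n, j ≤ j₀ → (bV (v j)).1 ≤ (bV (v j₀)).1 := fun j hj => hmono hj
  have hlt_le : ∀ j : Fin n, j < j₀ → (bV (v j)).1 ≤ (bV (v j₀)).1 :=
    fun j hj => hAle j hj.le
  -- the new basis element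
  set e : (intervalSum F bV).V ((bV (v j₀)).1) :=
    ⟨Finsupp.single (v j₀) 1, Finsupp.single_mem_supported F 1 (haliveA j₀)⟩ with hedef
  -- pushforwards of old x's
  set pushV : Fin n → (intervalSum F bV).V ((bV (v j₀)).1) := fun j =>
    if h : (bV (v j)).1 ≤ (bV (v j₀)).1 then (intervalSum F bV).map _ _ h (x j) else 0
    with hpushVdef
  have pushV_coord_zero : ∀ j : Fin n, j < j₀ → ((j:ℕ) < m) → (pushV j).1 (v j₀) = 0 := by
    intro j hj hjm
    simp only [hpushVdef, dif_pos (hlt_le j hj)]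
    rw [coord_map, if_pos (haliveA j₀)]
    by_contra hne
    obtain ⟨j', hj'le, hj'eq⟩ := hxsupp j hjm (v j₀) hne
    have hj'j0 : j' = j₀ := (hvinj hj'eq).symm
    rw [hj'j0] at hj'le
    exact absurd hj'le (not_le.mpr hj)
  have hne_of_lt : ∀ j : Fin n, (j : ℕ) < m → j ≠ j₀ :=
    fun j hj => Fin.ne_of_val_ne (Nat.ne_of_lt hj)
  have heq_of : ∀ j : Fin n, (j : ℕ) = m → j = j₀ := fun j hj => Fin.ext hj
  have hlt_j₀ : ∀ j : Fin n, j < j₀ → j ≠ j₀ := fun j hj => ne_of_lt hj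
  -- W-side elimination
  set JW : Finset (Fin n) :=
    Finset.univ.filter (fun j : Fin n => j < j₀ ∧ ∃ k, piv j = some (Sum.inr k)) with hJWdef
  have hJWmem : ∀ j ∈ JW, j < j₀ ∧ ∃ k, piv j = some (Sum.inr k) := by
    intro j hj
    simpa [hJWdef] using hj
  have hJWmem' : ∀ j : Fin n, j < j₀ → (∃ k, piv j = some (Sum.inr k)) → j ∈ JW := by
    intro j h1 h2
    simp [hJWdef, h1, h2]
  have hJWm : ∀ j ∈ JW, (j : ℕ) < m := fun j hj => (hJWmem j hj).1
  set φW : Fin n → ((intervalSum F bW).V ((bV (v j₀)).1 + δ) →ₗ[F] F) := fun j =>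
    (piv j).elim 0 (Sum.elim (fun _ => (0 : (intervalSum F bW).V ((bV (v j₀)).1 + δ) →ₗ[F] F))
      (fun k => coordFn bW ((bV (v j₀)).1 + δ) k)) with hφWdef
  have hφW_inr : ∀ (j : Fin n) k, piv j = some (Sum.inr k) →
      φW j = coordFn bW ((bV (v j₀)).1 + δ) k := by
    intro j k hk
    simp [hφWdef, hk]
  set yW : Fin n → (intervalSum F bW).V ((bV (v j₀)).1 + δ) := fun j =>
    if h : (bV (v j)).1 ≤ (bV (v j₀)).1 then
      (intervalSum F bW).map _ _ (add_le_add_left h δ) (ww bV bW hδ g v j (x j)) else 0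
    with hyWdef
  have hW1 : ∀ j ∈ JW, ∀ j' ∈ JW, j' < j → φW j' (yW j) = 0 := by
    intro j hj j' hj' hlt
    obtain ⟨hjlt, k, hk⟩ := hJWmem j hj
    obtain ⟨hj'lt, k', hk'⟩ := hJWmem j' hj'
    rw [hφW_inr j' k' hk', coordFn_apply]
    simp only [hyWdef, dif_pos (hlt_le j hjlt)]
    rw [coord_map]
    split_ifs with ha
    · exact hw0 j (hJWm j hj) j' hlt k' hk'
    · rfl
  have hW2 : ∀ j ∈ JW, φW j (yW j) ≠ 0 ∨ ∀ z, φW j z = 0 := by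
    intro j hj
    obtain ⟨hjlt, k, hk⟩ := hJWmem j hj
    by_cases ha : alive (bW k) ((bV (v j₀)).1 + δ)
    · left
      rw [hφW_inr j k hk, coordFn_apply]
      simp only [hyWdef, dif_pos (hlt_le j hjlt)]
      rw [coord_map, if_pos ha]
      exact (hinr j (hJWm j hj) k hk).1
    · right
      intro z
      rw [hφW_inr j k hk, coordFn_apply]
      by_contra hne
      exact ha (alive_of_coord z hne)
  obtain ⟨cW, hcW⟩ := elim JW yW φW hW1 hW2 (ww bV bW hδ g v j₀ e)
  set x₁ : (intervalSum F bV).V ((bV (v j₀)).1) := e - ∑ j ∈ JW, cW j • pushV j with hx₁def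
  have hwx₁ : ww bV bW hδ g v j₀ x₁ = ww bV bW hδ g v j₀ e - ∑ j ∈ JW, cW j • yW j := by
    rw [hx₁def, map_sub, map_sum]
    congr 1
    refine Finset.sum_congr rfl fun j hj => ?_
    rw [map_smul]
    congr 1
    obtain ⟨hjlt, _⟩ := hJWmem j hj
    simp only [hpushVdef, hyWdef, dif_pos (hlt_le j hjlt)]
    exact (pushW_eq bV bW hδ g v hg j j₀ (hlt_le j hjlt) (x j)).symm
  have hw₁0 : ∀ j' : Fin n, j' < j₀ → ∀ k', piv j' = some (Sum.inr k') →
      (ww bV bW hδ g v j₀ x₁).1 k' = 0 := by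
    intro j' hj' k' hk'
    have hmem : j' ∈ JW := hJWmem' j' hj' ⟨k', hk'⟩
    have hz := hcW j' hmem
    rw [← hwx₁] at hz
    rwa [hφW_inr j' k' hk', coordFn_apply] at hz
  have coord_x₁ : ∀ k, (x₁).1 k = e.1 k - ∑ j ∈ JW, cW j * (pushV j).1 k := by
    intro k
    calc (x₁).1 k = coordFn bV _ k x₁ := rfl
      _ = coordFn bV _ k e - ∑ j ∈ JW, cW j * coordFn bV _ k (pushV j) := by
          rw [hx₁def, map_sub, map_sum]
          simp only [map_smul, smul_eq_mul]
      _ = e.1 k - ∑ j ∈ JW, cW j * (pushV j).1 k := rfl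
  have hecoord : e.1 (v j₀) = 1 := by
    show (Finsupp.single (v j₀) (1 : F)) (v j₀) = 1
    exact Finsupp.single_eq_same
  have hx₁coord : (x₁).1 (v j₀) = 1 := by
    rw [coord_x₁]
    have hz : ∑ j ∈ JW, cW j * (pushV j).1 (v j₀) = 0 :=
      Finset.sum_eq_zero fun j hj => by
        rw [pushV_coord_zero j (hJWmem j hj).1 (hJWm j hj), mul_zero]
    rw [hz, sub_zero, hecoord]
  have hx₁supp : ∀ k, (x₁).1 k ≠ 0 → ∃ j' : Fin n, j' ≤ j₀ ∧ k = v j' := by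
    intro k hk
    by_contra hnex
    apply hk
    rw [coord_x₁]
    have he0 : e.1 k = 0 := by
      have hkne : k ≠ v j₀ := fun h => hnex ⟨j₀, le_refl _, h⟩
      show (Finsupp.single (v j₀) (1 : F)) k = 0
      exact Finsupp.single_eq_of_ne' (fun h => hkne h.symm)
    rw [he0, Finset.sum_eq_zero, sub_zero]
    intro j hj
    have hjlt := (hJWmem j hj).1
    simp only [hpushVdef, dif_pos (hlt_le j hjlt)]
    rw [coord_map]
    split_ifs with ha
    · rcases eq_or_ne ((x j).1 k) 0 with h0 | h0
      · rw [h0, mul_zero]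
      · obtain ⟨j', hj'le, rfl⟩ := hxsupp j (hJWm j hj) k h0
        exact absurd ⟨j', hj'le.trans hjlt.le, rfl⟩ hnex
    · rw [mul_zero]
  by_cases hw₁ : ww bV bW hδ g v j₀ x₁ = 0
  · -- type B : kernel case
    have hker : g ((bV (v j₀)).1 + δ)
        ((intervalSum F bV).map _ _ (le_add_of_nonneg_right hδ.le) x₁) = 0 := by
      rw [hg]
      exact hw₁
    have hmemr : ((intervalSum F bV).map _ _ (le_add_of_nonneg_right hδ.le) x₁)
        ∈ LinearMap.range (f ((bV (v j₀)).1 + δ)) := by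
      rw [hexact]
      exact LinearMap.mem_ker.mpr hker
    obtain ⟨u₀, hu₀⟩ := hmemr
    set JU : Finset (Fin n) := Finset.univ.filter
      (fun j : Fin n => j < j₀ ∧ ∃ k, piv j = some (Sum.inl k)) with hJUdef
    have hJUmem : ∀ j ∈ JU, j < j₀ ∧ ∃ k, piv j = some (Sum.inl k) := by
      intro j hj
      simpa [hJUdef] using hj
    have hJUmem' : ∀ j : Fin n, j < j₀ → (∃ k, piv j = some (Sum.inl k)) → j ∈ JU := by
      intro j h1 h2
      simp [hJUdef, h1, h2]
    have hJUm : ∀ j ∈ JU, (j : ℕ) < m := fun j hj => (hJUmem j hj).1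
    set φU : Fin n → ((intervalSum F bU).V ((bV (v j₀)).1 + δ) →ₗ[F] F) := fun j =>
      (piv j).elim 0 (Sum.elim (fun k => coordFn bU ((bV (v j₀)).1 + δ) k)
        (fun _ => (0 : (intervalSum F bU).V ((bV (v j₀)).1 + δ) →ₗ[F] F))) with hφUdef
    have hφU_inl : ∀ (j : Fin n) k, piv j = some (Sum.inl k) →
        φU j = coordFn bU ((bV (v j₀)).1 + δ) k := by
      intro j k hk
      simp [hφUdef, hk]
    set yU : Fin n → (intervalSum F bU).V ((bV (v j₀)).1 + δ) := fun j =>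
      if h : (bV (v j)).1 ≤ (bV (v j₀)).1 then
        (intervalSum F bU).map _ _ (add_le_add_left h δ) (u j) else 0 with hyUdef
    have hU1 : ∀ j ∈ JU, ∀ j' ∈ JU, j' < j → φU j' (yU j) = 0 := by
      intro j hj j' hj' hlt
      obtain ⟨hjlt, k, hk⟩ := hJUmem j hj
      obtain ⟨hj'lt, k', hk'⟩ := hJUmem j' hj'
      rw [hφU_inl j' k' hk', coordFn_apply]
      simp only [hyUdef, dif_pos (hlt_le j hjlt)]
      rw [coord_map]
      split_ifs with ha
      · exact hu0 j (hJUm j hj) j' hlt k' hk'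
      · rfl
    have hU2 : ∀ j ∈ JU, φU j (yU j) ≠ 0 ∨ ∀ z, φU j z = 0 := by
      intro j hj
      obtain ⟨hjlt, k, hk⟩ := hJUmem j hj
      by_cases ha : alive (bU k) ((bV (v j₀)).1 + δ)
      · left
        rw [hφU_inl j k hk, coordFn_apply]
        simp only [hyUdef, dif_pos (hlt_le j hjlt)]
        rw [coord_map, if_pos ha]
        exact (hinl j (hJUm j hj) k hk).2.2.1
      · right
        intro z
        rw [hφU_inl j k hk, coordFn_apply]
        by_contra hne
        exact ha (alive_of_coord z hne)
    obtain ⟨cU, hcU⟩ := elim JU yU φU hU1 hU2 u₀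
    set u' : (intervalSum F bU).V ((bV (v j₀)).1 + δ) := u₀ - ∑ j ∈ JU, cU j • yU j
      with hu'def
    set x₂ : (intervalSum F bV).V ((bV (v j₀)).1) := x₁ - ∑ j ∈ JU, cU j • pushV j
      with hx₂def
    have hlift : f ((bV (v j₀)).1 + δ) u'
        = (intervalSum F bV).map _ _ (le_add_of_nonneg_right hδ.le) x₂ := by
      rw [hu'def, hx₂def, map_sub, map_sub, map_sum, map_sum, hu₀]
      congr 1
      refine Finset.sum_congr rfl fun j hj => ?_
      rw [map_smul, map_smul]
      congr 1
      obtain ⟨hjlt, k, hk⟩ := hJUmem j hj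
      simp only [hyUdef, hpushVdef, dif_pos (hlt_le j hjlt)]
      rw [hf, (hinl j (hJUm j hj) k hk).2.1, PersMod.map_comp, PersMod.map_comp]
    have hwx₂ : ww bV bW hδ g v j₀ x₂ = 0 := by
      have hz : ∀ j ∈ JU, cU j • ww bV bW hδ g v j₀ (pushV j) = 0 := by
        intro j hj
        obtain ⟨hjlt, k, hk⟩ := hJUmem j hj
        have h1 : ww bV bW hδ g v j₀ (pushV j) = 0 := by
          simp only [hpushVdef, dif_pos (hlt_le j hjlt)]
          rw [← pushW_eq bV bW hδ g v hg j j₀ (hlt_le j hjlt) (x j),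
            (hinl j (hJUm j hj) k hk).1, map_zero]
        rw [h1, smul_zero]
      rw [hx₂def, map_sub, map_sum]
      simp only [map_smul]
      rw [hw₁, Finset.sum_eq_zero hz, sub_zero]
    have coord_x₂ : ∀ k, (x₂).1 k = (x₁).1 k - ∑ j ∈ JU, cU j * (pushV j).1 k := by
      intro k
      calc (x₂).1 k = coordFn bV _ k x₂ := rfl
        _ = coordFn bV _ k x₁ - ∑ j ∈ JU, cU j * coordFn bV _ k (pushV j) := by
            rw [hx₂def, map_sub, map_sum]
            simp only [map_smul, smul_eq_mul]
        _ = (x₁).1 k - ∑ j ∈ JU, cU j * (pushV j).1 k := rfl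
    have hx₂coord : (x₂).1 (v j₀) = 1 := by
      rw [coord_x₂]
      have hz : ∑ j ∈ JU, cU j * (pushV j).1 (v j₀) = 0 :=
        Finset.sum_eq_zero fun j hj => by
          rw [pushV_coord_zero j (hJUmem j hj).1 (hJUm j hj), mul_zero]
      rw [hz, sub_zero, hx₁coord]
    have hx₂supp : ∀ k, (x₂).1 k ≠ 0 → ∃ j' : Fin n, j' ≤ j₀ ∧ k = v j' := by
      intro k hk
      by_contra hnex
      apply hk
      rw [coord_x₂]
      have h1 : (x₁).1 k = 0 := by
        by_contra h0
        exact hnex (hx₁supp k h0)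
      rw [h1, Finset.sum_eq_zero, sub_zero]
      intro j hj
      have hjlt := (hJUmem j hj).1
      simp only [hpushVdef, dif_pos (hlt_le j hjlt)]
      rw [coord_map]
      split_ifs with ha
      · rcases eq_or_ne ((x j).1 k) 0 with h0 | h0
        · rw [h0, mul_zero]
        · obtain ⟨j', hj'le, rfl⟩ := hxsupp j (hJUm j hj) k h0
          exact absurd ⟨j', hj'le.trans hjlt.le, rfl⟩ hnex
      · rw [mul_zero]
    have hu'0 : ∀ j' : Fin n, j' < j₀ → ∀ k', piv j' = some (Sum.inl k') →
        (u').1 k' = 0 := by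
      intro j' hj' k' hk'
      have hmem2 : j' ∈ JU := hJUmem' j' hj' ⟨k', hk'⟩
      have hz := hcU j' hmem2
      rwa [hφU_inl j' k' hk', coordFn_apply] at hz
    have hMB : (((bV (v j₀)).1 + δ : ℝ) : EReal) < (bV (v j₀)).2 := by
      refine lt_trans ?_ (hA2B j₀)
      exact_mod_cast (by linarith : (bV (v j₀)).1 + δ < (bV (v j₀)).1 + 2 * δ)
    have hlong : ∃ kU, (u').1 kU ≠ 0 ∧ (bV (v j₀)).2 ≤ (bU kU).2 := by
      by_contra hno
      push_neg at hno
      obtain ⟨t, ht1, ht2, ht3⟩ := exists_push (u').1.support (fun k => (bU k).2)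
        ((bV (v j₀)).2) ((bV (v j₀)).1 + δ) hMB
        (fun k hkmem => hno k (Finsupp.mem_support_iff.mp hkmem))
      have hzero : (intervalSum F bU).map _ t ht1 u' = 0 :=
        map_eq_zero ht1 u' (fun k hkc ha =>
          absurd (lt_of_lt_of_le ha.2 (ht3 k (Finsupp.mem_support_iff.mpr hkc)))
            (lt_irrefl _))
      have hAt : (bV (v j₀)).1 ≤ t := le_trans (le_add_of_nonneg_right hδ.le) ht1
      have h1 : (0 : (intervalSum F bV).V t)
          = (intervalSum F bV).map ((bV (v j₀)).1) t hAt x₂ := by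
        calc (0 : (intervalSum F bV).V t)
            = f t ((intervalSum F bU).map _ t ht1 u') := by rw [hzero, map_zero]
          _ = (intervalSum F bV).map _ t ht1 (f _ u') := hf _ _ _ _
          _ = (intervalSum F bV).map _ t ht1
              ((intervalSum F bV).map _ _ (le_add_of_nonneg_right hδ.le) x₂) := by
                rw [hlift]
          _ = (intervalSum F bV).map ((bV (v j₀)).1) t hAt x₂ :=
                PersMod.map_comp _ _ _ _ _ _ _
      have h2 := congrArg (fun z : (intervalSum F bV).V t => z.1 (v j₀)) h1
      rw [coord_map, if_pos ⟨hAt, ht2⟩, hx₂coord] at h2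
      exact one_ne_zero h2.symm
    obtain ⟨kU, hkU, hkUB⟩ := hlong
    have halU : alive (bU kU) ((bV (v j₀)).1 + δ) := alive_of_coord _ hkU
    have hlenU : (δ : EReal) < barLength (bU kU) := by
      refine length_gt halU.1 ?_
      have harith : ((bV (v j₀)).1 + δ) + δ = (bV (v j₀)).1 + 2 * δ := by ring
      rw [harith]
      exact lt_of_lt_of_le (hA2B j₀) hkUB
    refine ⟨{ x := Function.update x j₀ x₂, u := Function.update u j₀ u',
              piv := Function.update piv j₀ (some (Sum.inl kU)),
              hsome := ?_, hx1 := ?_, hxsupp := ?_, hw0 := ?_, hinr := ?_,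
              hinl := ?_, hu0 := ?_ }⟩
    · intro j hj
      rcases Nat.lt_succ_iff_lt_or_eq.mp hj with hj | hj
      · obtain ⟨p, hp⟩ := hsome j hj
        exact ⟨p, by rwa [Function.update_of_ne (hne_of_lt j hj)]⟩
      · rw [heq_of j hj, Function.update_self]
        exact ⟨_, rfl⟩
    · intro j hj
      rcases Nat.lt_succ_iff_lt_or_eq.mp hj with hj | hj
      · rw [Function.update_of_ne (hne_of_lt j hj)]
        exact hx1 j hj
      · rw [heq_of j hj, Function.update_self]
        exact hx₂coord
    · intro j hj
      rcases Nat.lt_succ_iff_lt_or_eq.mp hj with hj | hj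
      · rw [Function.update_of_ne (hne_of_lt j hj)]
        exact hxsupp j hj
      · have hjj : j = j₀ := heq_of j hj
        subst hjj
        rw [Function.update_self]
        intro k hk
        exact hx₂supp k hk
    · intro j hj j' hj' k' hk'
      rcases Nat.lt_succ_iff_lt_or_eq.mp hj with hj | hj
      · have hj'm : (j' : ℕ) < m := lt_trans hj' hj
        rw [Function.update_of_ne (hne_of_lt j' hj'm)] at hk'
        simp only [Function.update_of_ne (hne_of_lt j hj)]
        exact hw0 j hj j' hj' k' hk'
      · have hjj : j = j₀ := heq_of j hj
        subst hjj
        have hj'm : (j' : ℕ) < m := Fin.lt_def.mp hj'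
        rw [Function.update_of_ne (hne_of_lt j' hj'm)] at hk'
        simp only [Function.update_self]
        rw [hwx₂]
        rfl
    · intro j hj k hk
      rcases Nat.lt_succ_iff_lt_or_eq.mp hj with hj | hj
      · rw [Function.update_of_ne (hne_of_lt j hj)] at hk
        simp only [Function.update_of_ne (hne_of_lt j hj)]
        exact hinr j hj k hk
      · have hjj : j = j₀ := heq_of j hj
        subst hjj
        rw [Function.update_self] at hk
        simp at hk
    · intro j hj k hk
      rcases Nat.lt_succ_iff_lt_or_eq.mp hj with hj | hj
      · rw [Function.update_of_ne (hne_of_lt j hj)] at hk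
        simp only [Function.update_of_ne (hne_of_lt j hj)]
        exact hinl j hj k hk
      · have hjj : j = j₀ := heq_of j hj
        subst hjj
        rw [Function.update_self] at hk
        have hkk : kU = k := by simpa using hk
        subst hkk
        simp only [Function.update_self]
        exact ⟨hwx₂, hlift, hkU, hlenU⟩
    · intro j hj j' hj' k' hk'
      rcases Nat.lt_succ_iff_lt_or_eq.mp hj with hj | hj
      · have hj'm : (j' : ℕ) < m := lt_trans hj' hj
        rw [Function.update_of_ne (hne_of_lt j' hj'm)] at hk'
        simp only [Function.update_of_ne (hne_of_lt j hj)]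
        exact hu0 j hj j' hj' k' hk'
      · have hjj : j = j₀ := heq_of j hj
        subst hjj
        have hj'm : (j' : ℕ) < m := Fin.lt_def.mp hj'
        rw [Function.update_of_ne (hne_of_lt j' hj'm)] at hk'
        simp only [Function.update_self]
        exact hu'0 j' hj' k' hk'
  · -- type A : image case
    have hnef : (ww bV bW hδ g v j₀ x₁).1 ≠ 0 := fun h => hw₁ (Subtype.ext h)
    obtain ⟨kW, hkWmem⟩ := Finsupp.support_nonempty_iff.mpr hnef
    have hkW : (ww bV bW hδ g v j₀ x₁).1 kW ≠ 0 := Finsupp.mem_support_iff.mp hkWmem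
    have halM : alive (bW kW) ((bV (v j₀)).1 + δ) := alive_of_coord _ hkW
    have hsrc : ((g ((bV (v j₀)).1)) x₁).1 kW ≠ 0 := by
      intro h0
      apply hkW
      rw [ww_apply, coord_map, h0, ite_self]
    have halA : alive (bW kW) ((bV (v j₀)).1) := alive_of_coord _ hsrc
    have hlenW : (δ : EReal) < barLength (bW kW) := length_gt halA.1 halM.2
    refine ⟨{ x := Function.update x j₀ x₁, u := Function.update u j₀ 0,
              piv := Function.update piv j₀ (some (Sum.inr kW)),
              hsome := ?_, hx1 := ?_, hxsupp := ?_, hw0 := ?_, hinr := ?_,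
              hinl := ?_, hu0 := ?_ }⟩
    · intro j hj
      rcases Nat.lt_succ_iff_lt_or_eq.mp hj with hj | hj
      · obtain ⟨p, hp⟩ := hsome j hj
        exact ⟨p, by rwa [Function.update_of_ne (hne_of_lt j hj)]⟩
      · rw [heq_of j hj, Function.update_self]
        exact ⟨_, rfl⟩
    · intro j hj
      rcases Nat.lt_succ_iff_lt_or_eq.mp hj with hj | hj
      · rw [Function.update_of_ne (hne_of_lt j hj)]
        exact hx1 j hj
      · rw [heq_of j hj, Function.update_self]
        exact hx₁coord
    · intro j hj
      rcases Nat.lt_succ_iff_lt_or_eq.mp hj with hj | hj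
      · rw [Function.update_of_ne (hne_of_lt j hj)]
        exact hxsupp j hj
      · have hjj : j = j₀ := heq_of j hj
        subst hjj
        rw [Function.update_self]
        intro k hk
        obtain ⟨j', h1, h2⟩ := hx₁supp k hk
        exact ⟨j', h1, h2⟩
    · intro j hj j' hj' k' hk'
      rcases Nat.lt_succ_iff_lt_or_eq.mp hj with hj | hj
      · have hj'm : (j' : ℕ) < m := lt_trans hj' hj
        rw [Function.update_of_ne (hne_of_lt j' hj'm)] at hk'
        simp only [Function.update_of_ne (hne_of_lt j hj)]
        exact hw0 j hj j' hj' k' hk'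
      · have hjj : j = j₀ := heq_of j hj
        subst hjj
        have hj'm : (j' : ℕ) < m := Fin.lt_def.mp hj'
        rw [Function.update_of_ne (hne_of_lt j' hj'm)] at hk'
        simp only [Function.update_self]
        exact hw₁0 j' hj' k' hk'
    · intro j hj k hk
      rcases Nat.lt_succ_iff_lt_or_eq.mp hj with hj | hj
      · rw [Function.update_of_ne (hne_of_lt j hj)] at hk
        simp only [Function.update_of_ne (hne_of_lt j hj)]
        exact hinr j hj k hk
      · have hjj : j = j₀ := heq_of j hj
        subst hjj
        rw [Function.update_self] at hk
        have hkk : kW = k := by simpa using hk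
        subst hkk
        simp only [Function.update_self]
        exact ⟨hkW, hlenW, trivial⟩
    · intro j hj k hk
      rcases Nat.lt_succ_iff_lt_or_eq.mp hj with hj | hj
      · rw [Function.update_of_ne (hne_of_lt j hj)] at hk
        simp only [Function.update_of_ne (hne_of_lt j hj)]
        exact hinl j hj k hk
      · have hjj : j = j₀ := heq_of j hj
        subst hjj
        rw [Function.update_self] at hk
        simp at hk
    · intro j hj j' hj' k' hk'
      rcases Nat.lt_succ_iff_lt_or_eq.mp hj with hj | hj
      · have hj'm : (j' : ℕ) < m := lt_trans hj' hj
        rw [Function.update_of_ne (hne_of_lt j' hj'm)] at hk'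
        simp only [Function.update_of_ne (hne_of_lt j hj)]
        exact hu0 j hj j' hj' k' hk'
      · have hjj : j = j₀ := heq_of j hj
        subst hjj
        simp only [Function.update_self]
        rfl

include hδ in
set_option maxHeartbeats 800000 in
theorem engine
    (hf : ∀ s t (h : s ≤ t) (z : (intervalSum F bU).V s),
      f t ((intervalSum F bU).map s t h z) = (intervalSum F bV).map s t h (f s z))
    (hg : ∀ s t (h : s ≤ t) (z : (intervalSum F bV).V s),
      g t ((intervalSum F bV).map s t h z) = (intervalSum F bW).map s t h (g s z))
    (hexact : ∀ t, LinearMap.range (f t) = LinearMap.ker (g t))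
    (FU : Finite {k : ιU // (δ : EReal) < barLength (bU k)})
    (FW : Finite {k : ιW // (δ : EReal) < barLength (bW k)})
    (FV : Finite {i : ιV // ((2 * δ : ℝ) : EReal) < barLength (bV i)}) :
    Nat.card {i : ιV // ((2 * δ : ℝ) : EReal) < barLength (bV i)}
      ≤ Nat.card {k : ιU // (δ : EReal) < barLength (bU k)}
        + Nat.card {k : ιW // (δ : EReal) < barLength (bW k)} := by
  classical
  set n := Nat.card {i : ιV // ((2 * δ : ℝ) : EReal) < barLength (bV i)} with hn
  obtain eqv := (Finite.equivFin {i : ιV // ((2 * δ : ℝ) : EReal) < barLength (bV i)})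
  set key : Fin n → ℝ := fun j => (bV (eqv.symm j).1).1 with hkey
  set σ := Tuple.sort key with hσ
  set v : Fin n → ιV := fun j => (eqv.symm (σ j)).1 with hv
  have hmono : Monotone fun j : Fin n => (bV (v j)).1 := Tuple.monotone_sort key
  have hvinj : Function.Injective v := by
    intro a b hab
    have : eqv.symm (σ a) = eqv.symm (σ b) := Subtype.ext hab
    exact σ.injective (eqv.symm.injective this)
  have hSV : ∀ j : Fin n, ((2 * δ : ℝ) : EReal) < barLength (bV (v j)) :=
    fun j => (eqv.symm (σ j)).2
  have hstage : ∀ m : ℕ, m ≤ n → Nonempty (Stage bU bV bW hδ f g v m) := by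
    intro m
    induction m with
    | zero => intro _; exact stage_zero bU bV bW hδ f g v
    | succ m ih =>
      intro hm
      obtain ⟨S⟩ := ih (le_of_lt (Nat.lt_of_succ_le hm))
      exact stage_step bU bV bW hδ f g v hf hg hexact hmono hvinj hSV m
        (Nat.lt_of_succ_le hm) S
  obtain ⟨S⟩ := hstage n le_rfl
  have hΨ : ∀ j : Fin n,
      ∃ p : {k : ιU // (δ : EReal) < barLength (bU k)}
          ⊕ {k : ιW // (δ : EReal) < barLength (bW k)},
        (∀ k, p = Sum.inl k → S.piv j = some (Sum.inl k.1))
          ∧ (∀ k, p = Sum.inr k → S.piv j = some (Sum.inr k.1)) := by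
    intro j
    obtain ⟨p, hp⟩ := S.hsome j j.isLt
    match p, hp with
    | Sum.inl k, hp =>
      refine ⟨Sum.inl ⟨k, (S.hinl j j.isLt k hp).2.2.2⟩, ?_, ?_⟩
      · intro k' hk'
        obtain rfl : k' = ⟨k, (S.hinl j j.isLt k hp).2.2.2⟩ := by simpa using hk'.symm
        exact hp
      · intro k' hk'
        simp at hk'
    | Sum.inr k, hp =>
      refine ⟨Sum.inr ⟨k, (S.hinr j j.isLt k hp).2.1⟩, ?_, ?_⟩
      · intro k' hk'
        simp at hk'
      · intro k' hk'
        obtain rfl : k' = ⟨k, (S.hinr j j.isLt k hp).2.1⟩ := by simpa using hk'.symm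
        exact hp
  choose Ψ hΨl hΨr using hΨ
  have hkey : ∀ a b : Fin n, b < a → Ψ a = Ψ b → False := by
    intro a b hba hab
    match hp : Ψ a with
    | Sum.inl k =>
      have ha' : S.piv a = some (Sum.inl k.1) := hΨl a k hp
      have hb' : S.piv b = some (Sum.inl k.1) := hΨl b k (by rw [← hab]; exact hp)
      have h1 := (S.hinl a a.isLt k.1 ha').2.2.1
      have h2 := S.hu0 a a.isLt b hba k.1 hb'
      exact h1 h2
    | Sum.inr k =>
      have ha' : S.piv a = some (Sum.inr k.1) := hΨr a k hp
      have hb' : S.piv b = some (Sum.inr k.1) := hΨr b k (by rw [← hab]; exact hp)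
      have h1 := (S.hinr a a.isLt k.1 ha').1
      have h2 := S.hw0 a a.isLt b hba k.1 hb'
      exact h1 h2
  have hinj : Function.Injective Ψ := by
    intro a b hab
    rcases lt_trichotomy a b with h | h | h
    · exact absurd hab.symm (fun hh => hkey b a h hh)
    · exact h
    · exact absurd hab (fun hh => hkey a b h hh)
  have hcard := Nat.card_le_card_of_injective Ψ hinj
  rw [Nat.card_sum] at hcard
  simpa using hcard

end Engine

theorem subtype_map_inj {α : Type} {P Q : α → Prop} (h : ∀ a, P a → Q a) :
    Function.Injective (fun k : {a // P a} => (⟨k.1, h k.1 k.2⟩ : {a // Q a})) := by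
  intro a b hab
  apply Subtype.ext
  have h2 := Subtype.ext_iff.mp hab
  simpa using h2

end Stmt7


set_option maxHeartbeats 800000 in
/-- If `U → V → W` is an exact sequence of moderate persistence modules
(exact at `V`), then for every `ε > 0`, `b_{2ε}(V) ≤ b_ε(U) + b_ε(W)`. -/
theorem stmt7 (F : Type) [Field F] (U V W : PersMod F)
    {ιU ιV ιW : Type} (barsU : ιU → ℝ × EReal) (barsV : ιV → ℝ × EReal)
    (barsW : ιW → ℝ × EReal)
    (hU : HasBarcode F U barsU) (hV : HasBarcode F V barsV) (hW : HasBarcode F W barsW)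
    (f : ∀ t, U.V t →ₗ[F] V.V t) (g : ∀ t, V.V t →ₗ[F] W.V t)
    (hf : ∀ s t (h : s ≤ t) (x : U.V s), f t (U.map s t h x) = V.map s t h (f s x))
    (hg : ∀ s t (h : s ≤ t) (x : V.V s), g t (V.map s t h x) = W.map s t h (g s x))
    (hexact : ∀ t, LinearMap.range (f t) = LinearMap.ker (g t))
    (hmodU : ∀ ε > (0 : ℝ), Finite {i : ιU // (ε : EReal) ≤ barLength (barsU i)})
    (hmodV : ∀ ε > (0 : ℝ), Finite {i : ιV // (ε : EReal) ≤ barLength (barsV i)})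
    (hmodW : ∀ ε > (0 : ℝ), Finite {i : ιW // (ε : EReal) ≤ barLength (barsW i)})
    (ε : ℝ) (hε : 0 < ε) :
    bCount barsV (2 * ε) ≤ bCount barsU ε + bCount barsW ε := by
  classical
  obtain ⟨eU, heU⟩ := hU
  obtain ⟨eV, heV⟩ := hV
  obtain ⟨eW, heW⟩ := hW
  -- transported morphisms
  set f' : ∀ t, (intervalSum F barsU).V t →ₗ[F] (intervalSum F barsV).V t :=
    fun t => (eV t).toLinearMap ∘ₗ (f t) ∘ₗ (eU t).symm.toLinearMap with hf'def
  set g' : ∀ t, (intervalSum F barsV).V t →ₗ[F] (intervalSum F barsW).V t :=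
    fun t => (eW t).toLinearMap ∘ₗ (g t) ∘ₗ (eV t).symm.toLinearMap with hg'def
  have hsymmU : ∀ s t (h : s ≤ t) (z : (intervalSum F barsU).V s),
      (eU t).symm ((intervalSum F barsU).map s t h z) = U.map s t h ((eU s).symm z) := by
    intro s t h z
    apply (eU t).injective
    rw [LinearEquiv.apply_symm_apply, heU s t h, LinearEquiv.apply_symm_apply]
  have hsymmV : ∀ s t (h : s ≤ t) (z : (intervalSum F barsV).V s),
      (eV t).symm ((intervalSum F barsV).map s t h z) = V.map s t h ((eV s).symm z) := by
    intro s t h z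
    apply (eV t).injective
    rw [LinearEquiv.apply_symm_apply, heV s t h, LinearEquiv.apply_symm_apply]
  have hf' : ∀ s t (h : s ≤ t) (z : (intervalSum F barsU).V s),
      f' t ((intervalSum F barsU).map s t h z)
        = (intervalSum F barsV).map s t h (f' s z) := by
    intro s t h z
    calc f' t ((intervalSum F barsU).map s t h z)
        = eV t (f t ((eU t).symm ((intervalSum F barsU).map s t h z))) := rfl
      _ = eV t (f t (U.map s t h ((eU s).symm z))) := by rw [hsymmU]
      _ = eV t (V.map s t h (f s ((eU s).symm z))) := by rw [hf]
      _ = (intervalSum F barsV).map s t h (eV s (f s ((eU s).symm z))) := heV s t h _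
      _ = (intervalSum F barsV).map s t h (f' s z) := rfl
  have hg' : ∀ s t (h : s ≤ t) (z : (intervalSum F barsV).V s),
      g' t ((intervalSum F barsV).map s t h z)
        = (intervalSum F barsW).map s t h (g' s z) := by
    intro s t h z
    calc g' t ((intervalSum F barsV).map s t h z)
        = eW t (g t ((eV t).symm ((intervalSum F barsV).map s t h z))) := rfl
      _ = eW t (g t (V.map s t h ((eV s).symm z))) := by rw [hsymmV]
      _ = eW t (W.map s t h (g s ((eV s).symm z))) := by rw [hg]
      _ = (intervalSum F barsW).map s t h (eW s (g s ((eV s).symm z))) := heW s t h _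
      _ = (intervalSum F barsW).map s t h (g' s z) := rfl
  have hexact' : ∀ t, LinearMap.range (f' t) = LinearMap.ker (g' t) := by
    intro t
    ext z
    simp only [LinearMap.mem_range, LinearMap.mem_ker]
    constructor
    · rintro ⟨w, rfl⟩
      show eW t (g t ((eV t).symm (eV t (f t ((eU t).symm w))))) = 0
      rw [LinearEquiv.symm_apply_apply]
      have hmem : f t ((eU t).symm w) ∈ LinearMap.ker (g t) := by
        rw [← hexact]
        exact ⟨_, rfl⟩
      rw [LinearMap.mem_ker.mp hmem, map_zero]
    · intro hz
      have h0 : g t ((eV t).symm z) = 0 := by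
        apply (eW t).injective
        rw [map_zero]
        exact hz
      have hmem : (eV t).symm z ∈ LinearMap.range (f t) := by
        rw [hexact]
        exact LinearMap.mem_ker.mpr h0
      obtain ⟨w, hw⟩ := hmem
      refine ⟨eU t w, ?_⟩
      show eV t (f t ((eU t).symm (eU t w))) = z
      rw [LinearEquiv.symm_apply_apply, hw, LinearEquiv.apply_symm_apply]
  -- choice of δ
  have hε2 : (0 : ℝ) < ε / 2 := by linarith
  have FU2 : Finite {k : ιU // ((ε / 2 : ℝ) : EReal) ≤ barLength (barsU k)} :=
    hmodU (ε / 2) hε2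
  have FW2 : Finite {k : ιW // ((ε / 2 : ℝ) : EReal) ≤ barLength (barsW k)} :=
    hmodW (ε / 2) hε2
  set RU : Set ℝ := Set.range
    (fun k : {k : ιU // ((ε / 2 : ℝ) : EReal) ≤ barLength (barsU k)} =>
      (barLength (barsU k.1)).toReal) with hRU
  set RW : Set ℝ := Set.range
    (fun k : {k : ιW // ((ε / 2 : ℝ) : EReal) ≤ barLength (barsW k)} =>
      (barLength (barsW k.1)).toReal) with hRW
  have hfin : ((RU ∪ RW) ∩ {r : ℝ | r < ε}).Finite :=
    ((Set.finite_range _).union (Set.finite_range _)).inter_of_left _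
  set Rfin : Finset ℝ := hfin.toFinset with hRfin
  set Dfin : Finset ℝ := insert (ε / 2) Rfin with hDfin
  have hDne : Dfin.Nonempty := Finset.insert_nonempty _ _
  set δ : ℝ := Dfin.max' hDne with hδdef
  have hδge2 : ε / 2 ≤ δ := Finset.le_max' _ _ (Finset.mem_insert_self _ _)
  have hδpos : 0 < δ := lt_of_lt_of_le hε2 hδge2
  have hδlt : δ < ε := by
    rw [hδdef]
    rw [Finset.max'_lt_iff]
    intro r hr
    rcases Finset.mem_insert.mp hr with rfl | hr
    · linarith
    · have := (Set.Finite.mem_toFinset hfin).mp hr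
      exact this.2
  have hδmem : ∀ r ∈ RU ∪ RW, r < ε → r ≤ δ := by
    intro r hr hrε
    refine Finset.le_max' _ _ ?_
    exact Finset.mem_insert_of_mem ((Set.Finite.mem_toFinset hfin).mpr ⟨hr, hrε⟩)
  have hUc : ∀ k : ιU, (δ : EReal) < barLength (barsU k)
      → (ε : EReal) ≤ barLength (barsU k) := by
    intro k h
    by_contra hlt
    rw [not_le] at hlt
    have h2 : ((ε / 2 : ℝ) : EReal) ≤ barLength (barsU k) :=
      le_of_lt (lt_of_le_of_lt (EReal.coe_le_coe_iff.mpr hδge2) h)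
    have hnetop : barLength (barsU k) ≠ ⊤ := fun hh => by
      rw [hh] at hlt
      exact absurd hlt (by simp)
    have hnebot : barLength (barsU k) ≠ ⊥ := fun hh => by
      rw [hh] at h2
      exact absurd h2 (by simp)
    have hco : ((barLength (barsU k)).toReal : EReal) = barLength (barsU k) :=
      EReal.coe_toReal hnetop hnebot
    have hmem : (barLength (barsU k)).toReal ∈ RU :=
      ⟨⟨k, h2⟩, rfl⟩
    have hrε : (barLength (barsU k)).toReal < ε := by
      rw [← EReal.coe_lt_coe_iff, hco]
      exact hlt
    have hle := hδmem _ (Or.inl hmem) hrε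
    rw [← EReal.coe_le_coe_iff] at hle
    rw [hco] at hle
    exact absurd h (not_lt.mpr hle)
  have hWc : ∀ k : ιW, (δ : EReal) < barLength (barsW k)
      → (ε : EReal) ≤ barLength (barsW k) := by
    intro k h
    by_contra hlt
    rw [not_le] at hlt
    have h2 : ((ε / 2 : ℝ) : EReal) ≤ barLength (barsW k) :=
      le_of_lt (lt_of_le_of_lt (EReal.coe_le_coe_iff.mpr hδge2) h)
    have hnetop : barLength (barsW k) ≠ ⊤ := fun hh => by
      rw [hh] at hlt
      exact absurd hlt (by simp)
    have hnebot : barLength (barsW k) ≠ ⊥ := fun hh => by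
      rw [hh] at h2
      exact absurd h2 (by simp)
    have hco : ((barLength (barsW k)).toReal : EReal) = barLength (barsW k) :=
      EReal.coe_toReal hnetop hnebot
    have hmem : (barLength (barsW k)).toReal ∈ RW :=
      ⟨⟨k, h2⟩, rfl⟩
    have hrε : (barLength (barsW k)).toReal < ε := by
      rw [← EReal.coe_lt_coe_iff, hco]
      exact hlt
    have hle := hδmem _ (Or.inr hmem) hrε
    rw [← EReal.coe_le_coe_iff] at hle
    rw [hco] at hle
    exact absurd h (not_lt.mpr hle)
  -- finiteness instances for the engine
  have FU : Finite {k : ιU // (δ : EReal) < barLength (barsU k)} := by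
    have := hmodU ε hε
    exact Finite.of_injective
      (fun k : {k : ιU // (δ : EReal) < barLength (barsU k)} =>
        (⟨k.1, hUc k.1 k.2⟩ : {k : ιU // (ε : EReal) ≤ barLength (barsU k)}))
      (Stmt7.subtype_map_inj _)
  have FW : Finite {k : ιW // (δ : EReal) < barLength (barsW k)} := by
    have := hmodW ε hε
    exact Finite.of_injective
      (fun k : {k : ιW // (δ : EReal) < barLength (barsW k)} =>
        (⟨k.1, hWc k.1 k.2⟩ : {k : ιW // (ε : EReal) ≤ barLength (barsW k)}))
      (Stmt7.subtype_map_inj _)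
  have FV : Finite {i : ιV // ((2 * δ : ℝ) : EReal) < barLength (barsV i)} := by
    have := hmodV (2 * δ) (by linarith)
    have hVc : ∀ i : ιV, ((2 * δ : ℝ) : EReal) < barLength (barsV i)
        → ((2 * δ : ℝ) : EReal) ≤ barLength (barsV i) := fun i hi => le_of_lt hi
    exact Finite.of_injective
      (fun k : {i : ιV // ((2 * δ : ℝ) : EReal) < barLength (barsV i)} =>
        (⟨k.1, hVc k.1 k.2⟩ : {i : ιV // ((2 * δ : ℝ) : EReal) ≤ barLength (barsV i)}))
      (Stmt7.subtype_map_inj _)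
  have hengine := Stmt7.engine barsU barsV barsW hδpos f' g' hf' hg' hexact' FU FW FV
  -- compare the three cardinalities
  have hV2 : bCount barsV (2 * ε)
      ≤ Nat.card {i : ιV // ((2 * δ : ℝ) : EReal) < barLength (barsV i)} := by
    have hVd : ∀ i : ιV, ((2 * ε : ℝ) : EReal) ≤ barLength (barsV i)
        → ((2 * δ : ℝ) : EReal) < barLength (barsV i) := fun i hi =>
      lt_of_lt_of_le (EReal.coe_lt_coe_iff.mpr (by linarith)) hi
    exact Nat.card_le_card_of_injective
      (fun k : {i : ιV // ((2 * ε : ℝ) : EReal) ≤ barLength (barsV i)} =>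
        (⟨k.1, hVd k.1 k.2⟩ : {i : ιV // ((2 * δ : ℝ) : EReal) < barLength (barsV i)}))
      (Stmt7.subtype_map_inj _)
  have hU2 : Nat.card {k : ιU // (δ : EReal) < barLength (barsU k)} ≤ bCount barsU ε := by
    have := hmodU ε hε
    exact Nat.card_le_card_of_injective
      (fun k : {k : ιU // (δ : EReal) < barLength (barsU k)} =>
        (⟨k.1, hUc k.1 k.2⟩ : {k : ιU // (ε : EReal) ≤ barLength (barsU k)}))
      (Stmt7.subtype_map_inj _)
  have hW2 : Nat.card {k : ιW // (δ : EReal) < barLength (barsW k)} ≤ bCount barsW ε := by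
    have := hmodW ε hε
    exact Nat.card_le_card_of_injective
      (fun k : {k : ιW // (δ : EReal) < barLength (barsW k)} =>
        (⟨k.1, hWc k.1 k.2⟩ : {k : ιW // (ε : EReal) ≤ barLength (barsW k)}))
      (Stmt7.subtype_map_inj _)
  calc bCount barsV (2 * ε)
      ≤ Nat.card {i : ιV // ((2 * δ : ℝ) : EReal) < barLength (barsV i)} := hV2
    _ ≤ Nat.card {k : ιU // (δ : EReal) < barLength (barsU k)}
        + Nat.card {k : ιW // (δ : EReal) < barLength (barsW k)} := hengine
    _ ≤ bCount barsU ε + bCount barsW ε := add_le_add hU2 hW2
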